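/- Suppose L and L̃ are Q × P matrices of full column rank with unordered generalized lower triangular (UGLT) structures, and suppose L Lᵀ = L̃ L̃ᵀ. Then there exist a P × P permutation matrix P_per and a diagonal sign matrix P_sign (diagonal entries ±1) such that L̃ = L P_per P_sign. -/

import Mathlib

open Matrix

/-- A `Q × P` matrix `L` has an unordered generalized lower triangular (UGLT) structure if
each column `p` has a pivot row `ℓ p` (the first row with a nonzero entry in column `p`),
and the pivot rows are pairwise distinct. -/
def IsUGLT {Q P : ℕ} (L : Matrix (Fin Q) (Fin P) ℝ) : Prop :=
  ∃ ℓ : Fin P → Fin Q, Function.Injective ℓ ∧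
    ∀ p : Fin P, L (ℓ p) p ≠ 0 ∧ ∀ q : Fin Q, q < ℓ p → L q p = 0

/-- A square real matrix of full rank is a unit. -/
lemma aux_isUnit_of_rank {n : ℕ} (A : Matrix (Fin n) (Fin n) ℝ) (h : A.rank = n) :
    IsUnit A := by
  rw [← Matrix.mulVec_injective_iff_isUnit]
  have hrn := LinearMap.finrank_range_add_finrank_ker A.mulVecLin
  rw [show Module.finrank ℝ (LinearMap.range A.mulVecLin) = A.rank from rfl, h] at hrn
  simp only [Module.finrank_pi, Fintype.card_fin] at hrn
  have hker : LinearMap.ker A.mulVecLin = ⊥ := by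
    have : Module.finrank ℝ (LinearMap.ker A.mulVecLin) = 0 := by omega
    exact Submodule.finrank_eq_zero.mp this
  have := LinearMap.ker_eq_bot.mp hker
  exact this

/-- Pivot comparison lemma: if `L` is UGLT with pivot map `ℓ`, and column `p` of `L * M`
vanishes strictly above row `r`, then every nonzero entry `M j p` has `r ≤ ℓ j`. -/
lemma aux_pivot_le {Q P : ℕ} (L : Matrix (Fin Q) (Fin P) ℝ) (ℓ : Fin P → Fin Q)
    (hinj : Function.Injective ℓ)
    (hpiv : ∀ p : Fin P, L (ℓ p) p ≠ 0 ∧ ∀ q : Fin Q, q < ℓ p → L q p = 0)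
    (M : Matrix (Fin P) (Fin P) ℝ) (p : Fin P) (r : Fin Q)
    (hzero : ∀ q : Fin Q, q < r → (L * M) q p = 0) :
    ∀ j, M j p ≠ 0 → r ≤ ℓ j := by
  by_contra hcon
  push_neg at hcon
  obtain ⟨j₁, hj₁M, hj₁lt⟩ := hcon
  -- the set of bad columns
  classical
  set S : Finset (Fin P) := Finset.univ.filter (fun j => M j p ≠ 0 ∧ ℓ j < r) with hS
  have hj₁S : j₁ ∈ S := by simp [hS, hj₁M, hj₁lt]
  obtain ⟨j₀, hj₀S, hmin⟩ := S.exists_min_image ℓ ⟨j₁, hj₁S⟩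
  simp only [hS, Finset.mem_filter] at hj₀S
  obtain ⟨-, hj₀M, hj₀lt⟩ := hj₀S
  have hsum : (L * M) (ℓ j₀) p = L (ℓ j₀) j₀ * M j₀ p := by
    rw [Matrix.mul_apply]
    apply Finset.sum_eq_single j₀
    · intro j _ hne
      by_cases hMj : M j p = 0
      · simp [hMj]
      · have hlt : ℓ j₀ < ℓ j := by
          rcases lt_or_ge (ℓ j) r with hjr | hjr
          · have : j ∈ S := by simp [hS, hMj, hjr]
            exact lt_of_le_of_ne (hmin j this) (fun he => hne (hinj he.symm))
          · exact lt_of_lt_of_le hj₀lt hjr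
        rw [(hpiv j).2 (ℓ j₀) hlt, zero_mul]
    · intro h; exact absurd (Finset.mem_univ j₀) h
  have : (L * M) (ℓ j₀) p = 0 := hzero (ℓ j₀) hj₀lt
  rw [hsum] at this
  exact (mul_ne_zero (hpiv j₀).1 hj₀M) this

theorem stmt_15 {Q P : ℕ} (L L' : Matrix (Fin Q) (Fin P) ℝ)
    (hrank : L.rank = P) (hrank' : L'.rank = P)
    (hU : IsUGLT L) (hU' : IsUGLT L')
    (heq : L * Lᵀ = L' * L'ᵀ) :
    ∃ (σ : Equiv.Perm (Fin P)) (ε : Fin P → ℝ),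
      (∀ p, ε p = 1 ∨ ε p = -1) ∧
      L' = L * (σ.permMatrix ℝ) * Matrix.diagonal ε := by
  classical
  obtain ⟨ℓ, hℓinj, hℓ⟩ := hU
  obtain ⟨ℓ', hℓ'inj, hℓ'⟩ := hU'
  -- Gram matrices are invertible
  have hN : IsUnit (Lᵀ * L) := by
    apply aux_isUnit_of_rank
    rw [Matrix.rank_transpose_mul_self, hrank]
  have hG : IsUnit (L'ᵀ * L') := by
    apply aux_isUnit_of_rank
    rw [Matrix.rank_transpose_mul_self, hrank']
  have hNdet : IsUnit (Lᵀ * L).det := (Matrix.isUnit_iff_isUnit_det _).mp hN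
  have hGdet : IsUnit (L'ᵀ * L').det := (Matrix.isUnit_iff_isUnit_det _).mp hG
  set N : Matrix (Fin P) (Fin P) ℝ := Lᵀ * L with hNdef
  set M : Matrix (Fin P) (Fin P) ℝ := N⁻¹ * (Lᵀ * L') with hMdef
  -- left/right cancellation by L
  have hcancelL : ∀ {R : ℕ} {A B : Matrix (Fin P) (Fin R) ℝ}, L * A = L * B → A = B := by
    intro R A B h
    have h2 : N * A = N * B := by
      rw [hNdef, Matrix.mul_assoc, Matrix.mul_assoc, h]
    calc A = N⁻¹ * (N * A) := by
            rw [← Matrix.mul_assoc, Matrix.nonsing_inv_mul _ hNdet, Matrix.one_mul]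
      _ = N⁻¹ * (N * B) := by rw [h2]
      _ = B := by rw [← Matrix.mul_assoc, Matrix.nonsing_inv_mul _ hNdet, Matrix.one_mul]
  have hcancelR : ∀ {R : ℕ} {A B : Matrix (Fin R) (Fin P) ℝ}, A * Lᵀ = B * Lᵀ → A = B := by
    intro R A B h
    have h2 : A * N = B * N := by
      rw [hNdef, ← Matrix.mul_assoc, ← Matrix.mul_assoc, h]
    calc A = A * N * N⁻¹ := by
            rw [Matrix.mul_assoc, Matrix.mul_nonsing_inv _ hNdet, Matrix.mul_one]
      _ = B * N * N⁻¹ := by rw [h2]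
      _ = B := by rw [Matrix.mul_assoc, Matrix.mul_nonsing_inv _ hNdet, Matrix.mul_one]
  -- L * M = L'
  have hLM : L * M = L' := by
    have key : L * M * L'ᵀ = L' * L'ᵀ := by
      have h2 : Lᵀ * (L' * L'ᵀ) = N * Lᵀ := by
        rw [← heq, hNdef, Matrix.mul_assoc]
      calc L * M * L'ᵀ = L * (N⁻¹ * (Lᵀ * (L' * L'ᵀ))) := by
            simp only [hMdef, Matrix.mul_assoc]
        _ = L * (N⁻¹ * (N * Lᵀ)) := by rw [h2]
        _ = L * Lᵀ := by
            rw [← Matrix.mul_assoc N⁻¹, Matrix.nonsing_inv_mul _ hNdet, Matrix.one_mul]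
        _ = L' * L'ᵀ := heq
    have h3 : L * M * (L'ᵀ * L') = L' * (L'ᵀ * L') := by
      rw [← Matrix.mul_assoc, key, Matrix.mul_assoc]
    calc L * M = L * M * (L'ᵀ * L') * (L'ᵀ * L')⁻¹ := by
          rw [Matrix.mul_assoc (L * M), Matrix.mul_nonsing_inv _ hGdet, Matrix.mul_one]
      _ = L' * (L'ᵀ * L') * (L'ᵀ * L')⁻¹ := by rw [h3]
      _ = L' := by rw [Matrix.mul_assoc L', Matrix.mul_nonsing_inv _ hGdet, Matrix.mul_one]
  -- M is orthogonal
  have hMMT : M * Mᵀ = 1 := by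
    have e1 : L * (M * (Mᵀ * Lᵀ)) = L * Lᵀ := by
      calc L * (M * (Mᵀ * Lᵀ)) = (L * M) * (Mᵀ * Lᵀ) := (Matrix.mul_assoc L M _).symm
        _ = (L * M) * (L * M)ᵀ := by rw [← Matrix.transpose_mul L M]
        _ = L' * L'ᵀ := by rw [hLM]
        _ = L * Lᵀ := heq.symm
    have e2 : M * (Mᵀ * Lᵀ) = Lᵀ := hcancelL e1
    have e3 : (M * Mᵀ) * Lᵀ = (1 : Matrix (Fin P) (Fin P) ℝ) * Lᵀ := by
      rw [Matrix.mul_assoc, e2, Matrix.one_mul]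
    exact hcancelR e3
  have hMTM : Mᵀ * M = 1 := mul_eq_one_comm.mp hMMT
  have hL : L' * Mᵀ = L := by
    rw [← hLM, Matrix.mul_assoc, hMMT, Matrix.mul_one]
  -- pivot comparisons
  have hA : ∀ p j, M j p ≠ 0 → ℓ' p ≤ ℓ j := by
    intro p j hj
    refine aux_pivot_le L ℓ hℓinj hℓ M p (ℓ' p) ?_ j hj
    intro q hq
    rw [hLM]
    exact (hℓ' p).2 q hq
  have hB : ∀ p j, M j p ≠ 0 → ℓ j ≤ ℓ' p := by
    intro p j hj
    have hj' : Mᵀ p j ≠ 0 := by simpa [Matrix.transpose_apply] using hj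
    refine aux_pivot_le L' ℓ' hℓ'inj hℓ' Mᵀ j (ℓ j) ?_ p hj'
    intro q hq
    rw [hL]
    exact (hℓ j).2 q hq
  have hval : ∀ p j, M j p ≠ 0 → ℓ j = ℓ' p := fun p j hj =>
    le_antisymm (hB p j hj) (hA p j hj)
  -- each column of M has a nonzero entry
  have hex : ∀ p, ∃ j, M j p ≠ 0 := by
    intro p
    by_contra hcon
    push_neg at hcon
    have : L' (ℓ' p) p = 0 := by
      rw [← hLM, Matrix.mul_apply]
      apply Finset.sum_eq_zero
      intro j _
      rw [hcon j, mul_zero]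
    exact (hℓ' p).1 this
  choose f hf using hex
  have hfval : ∀ p, ℓ (f p) = ℓ' p := fun p => hval p (f p) (hf p)
  have huniq : ∀ p j, M j p ≠ 0 → j = f p := by
    intro p j hj
    apply hℓinj
    rw [hval p j hj, hfval p]
  have hfinj : Function.Injective f := by
    intro p p' hpp'
    apply hℓ'inj
    rw [← hfval p, ← hfval p', hpp']
  have hfbij : Function.Bijective f := Finite.injective_iff_bijective.mp hfinj
  set σ' : Equiv.Perm (Fin P) := Equiv.ofBijective f hfbij with hσ'
  set ε : Fin P → ℝ := fun p => M (f p) p with hε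
  have hεsign : ∀ p, ε p = 1 ∨ ε p = -1 := by
    intro p
    have h1 : (Mᵀ * M) p p = 1 := by rw [hMTM, Matrix.one_apply_eq]
    rw [Matrix.mul_apply] at h1
    have h2 : ∑ j, Mᵀ p j * M j p = M (f p) p * M (f p) p := by
      apply Finset.sum_eq_single (f p)
      · intro j _ hne
        have : M j p = 0 := by
          by_contra hc
          exact hne (huniq p j hc)
        rw [this, mul_zero]
      · intro h; exact absurd (Finset.mem_univ _) h
    rw [h2] at h1
    exact mul_self_eq_one_iff.mp h1
  refine ⟨σ'⁻¹, ε, hεsign, ?_⟩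
  have hperm : L * ((σ'⁻¹ : Equiv.Perm (Fin P)).permMatrix ℝ)
      = L.submatrix id (σ'⁻¹ : Equiv.Perm (Fin P)).symm :=
    PEquiv.mul_toMatrix_toPEquiv _ _
  ext q p
  have hlhs : L' q p = L q (f p) * M (f p) p := by
    rw [← hLM, Matrix.mul_apply]
    apply Finset.sum_eq_single (f p)
    · intro j _ hne
      have : M j p = 0 := by
        by_contra hc
        exact hne (huniq p j hc)
      rw [this, mul_zero]
    · intro h; exact absurd (Finset.mem_univ _) h
  rw [hlhs, Matrix.mul_diagonal, hperm, Matrix.submatrix_apply, id_eq]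
  simp only [hσ', hε, Equiv.Perm.inv_def, Equiv.symm_symm, Equiv.ofBijective_apply]
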